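/- Let S be a multiplicative semigroup of bounded operators on a complex Hilbert space H that contains every partial isometry of B(H). Then S is a selfadjoint-ideal (SI) semigroup. -/

import Mathlib

set_option synthInstance.maxHeartbeats 1000000
set_option maxHeartbeats 2000000
set_option linter.unusedVariables false

open ContinuousLinearMap

variable {H : Type*} [NormedAddCommGroup H] [InnerProductSpace ℂ H] [CompleteSpace H]

/-- A multiplicative semigroup of operators: a set closed under composition. -/
def IsMulSemigroup {M : Type*} [Mul M] (S : Set M) : Prop :=
  ∀ A ∈ S, ∀ B ∈ S, A * B ∈ S

/-- `J` is a (two-sided) semigroup-ideal of `S`. -/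
def IsSemigroupIdeal {M : Type*} [Mul M] (S J : Set M) : Prop :=
  J ⊆ S ∧ ∀ T ∈ J, ∀ X ∈ S, X * T ∈ J ∧ T * X ∈ J

/-- `S` is a selfadjoint-ideal (SI) semigroup: every semigroup-ideal of `S`
is closed under adjoints. -/
def IsSI (S : Set (H →L[ℂ] H)) : Prop :=
  ∀ J : Set (H →L[ℂ] H), IsSemigroupIdeal S J → ∀ T ∈ J, adjoint T ∈ J

local notation "⟪" x ", " y "⟫" => @inner ℂ _ _ x y

/-- Polar decomposition: every bounded operator `T` can be written as `V * A`
with `V` a partial isometry, `A` selfadjoint, and `adjoint V * V * A = A`. -/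
theorem exists_polar (T : H →L[ℂ] H) :
    ∃ V A : H →L[ℂ] H, V = V * adjoint V * V ∧ adjoint A = A ∧
      T = V * A ∧ (adjoint V * V) * A = A := by
  set A := CFC.sqrt (adjoint T * T) with hA
  have hpos : 0 ≤ adjoint T * T := by
    rw [← star_eq_adjoint]; exact star_mul_self_nonneg T
  have hAsa : IsSelfAdjoint A := IsSelfAdjoint.of_nonneg (CFC.sqrt_nonneg _)
  have hadjA : adjoint A = A := by rw [← star_eq_adjoint]; exact hAsa
  have hA2 : A * A = adjoint T * T := CFC.sqrt_mul_sqrt_self _ hpos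
  have hnorm : ∀ x : H, ‖A x‖ = ‖T x‖ := by
    intro x
    have key : ⟪A x, A x⟫ = ⟪T x, T x⟫ := by
      calc ⟪A x, A x⟫ = ⟪x, adjoint A (A x)⟫ := (adjoint_inner_right A _ _).symm
      _ = ⟪x, (A * A) x⟫ := by rw [hadjA]; rfl
      _ = ⟪x, adjoint T (T x)⟫ := by rw [hA2]; rfl
      _ = ⟪T x, T x⟫ := adjoint_inner_right T _ _
    have h3 : ‖A x‖^2 = ‖T x‖^2 := by
      rw [inner_self_eq_norm_sq_to_K, inner_self_eq_norm_sq_to_K] at key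
      exact_mod_cast key
    nlinarith [norm_nonneg (A x), norm_nonneg (T x)]
  -- the range of A and its closure
  set Ra : Submodule ℂ H := LinearMap.range (A : H →ₗ[ℂ] H) with hRa
  set K : Submodule ℂ H := Ra.topologicalClosure with hK
  haveI : CompleteSpace K := (Ra.isClosed_topologicalClosure).completeSpace_coe
  -- the densely defined isometry g : Ra → H, g (A x) = T x
  have hker : LinearMap.ker (A : H →ₗ[ℂ] H) ≤ LinearMap.ker (T : H →ₗ[ℂ] H) := by
    intro x hx
    simp only [LinearMap.mem_ker, ContinuousLinearMap.coe_coe] at hx ⊢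
    have := hnorm x
    rw [hx, norm_zero] at this
    exact norm_eq_zero.mp this.symm
  set g : Ra →ₗ[ℂ] H :=
    ((LinearMap.ker (A : H →ₗ[ℂ] H)).liftQ (T : H →ₗ[ℂ] H) hker).comp
      (LinearMap.quotKerEquivRange (A : H →ₗ[ℂ] H)).symm.toLinearMap with hg_def
  have hmemRa : ∀ x : H, A x ∈ Ra := fun x => ⟨x, rfl⟩
  have hg : ∀ x : H, g ⟨A x, hmemRa x⟩ = T x := by
    intro x
    have h1 : (LinearMap.quotKerEquivRange (A : H →ₗ[ℂ] H)).symm ⟨A x, hmemRa x⟩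
        = Submodule.Quotient.mk x := by
      rw [LinearEquiv.symm_apply_eq]
      rfl
    simp only [hg_def, LinearMap.comp_apply, LinearEquiv.coe_toLinearMap, h1,
      Submodule.liftQ_apply, ContinuousLinearMap.coe_coe]
  have hgnorm : ∀ y : Ra, ‖g y‖ = ‖y‖ := by
    rintro ⟨y, x, rfl⟩
    show ‖g ⟨A x, hmemRa x⟩‖ = ‖A x‖
    rw [hg x]
    exact (hnorm x).symm
  set f : Ra →L[ℂ] H := g.mkContinuous 1 (fun y => by rw [hgnorm]; simp) with hf_def
  have hf : ∀ x : H, f ⟨A x, hmemRa x⟩ = T x := fun x => hg x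
  -- the inclusion e : Ra → K
  set eIso : Ra →ₗᵢ[ℂ] K :=
    ⟨Submodule.inclusion Ra.le_topologicalClosure, fun x => rfl⟩ with he_def
  set e : Ra →L[ℂ] K := eIso.toContinuousLinearMap with heC_def
  have h_e : IsUniformInducing e := eIso.isometry.isUniformInducing
  have h_dense : DenseRange e := by
    intro y
    have himg : (Subtype.val '' Set.range e) = (Ra : Set H) := by
      ext z
      constructor
      · rintro ⟨w, ⟨u, rfl⟩, rfl⟩; exact u.2
      · intro hz; exact ⟨e ⟨z, hz⟩, ⟨⟨z, hz⟩, rfl⟩, rfl⟩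
    rw [closure_subtype, himg]
    exact y.2
  -- extend to W : K → H
  set W : K →L[ℂ] H := f.extend e with hW_def
  have hWe : ∀ u : Ra, W (e u) = f u := fun u => extend_eq f h_dense h_e u
  have hWnorm : ∀ y : K, ‖W y‖ = ‖y‖ := by
    have hclosed : IsClosed {y : K | ‖W y‖ = ‖y‖} :=
      isClosed_eq (continuous_norm.comp W.continuous) continuous_norm
    intro y
    refine h_dense.induction_on y hclosed fun u => ?_
    show ‖W (e u)‖ = ‖e u‖
    rw [hWe u]
    calc ‖f u‖ = ‖g u‖ := rfl
    _ = ‖u‖ := hgnorm u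
    _ = ‖e u‖ := rfl
  set WIso : K →ₗᵢ[ℂ] H := ⟨W.toLinearMap, fun y => hWnorm y⟩ with hWIso_def
  -- projection
  set P : H →L[ℂ] K := K.orthogonalProjectionOnto with hP_def
  set P' : H →L[ℂ] H := K.subtypeL.comp P with hP'_def
  have hPmem : ∀ y : H, y ∈ K → P' y = y := by
    intro y hy
    simp only [hP'_def, ContinuousLinearMap.comp_apply, Submodule.coe_subtypeL',
      Submodule.coe_subtype]
    exact congrArg Subtype.val (Submodule.orthogonalProjectionOnto_mem_subspace_eq_self (⟨y, hy⟩ : K))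
  have hP'sa : adjoint P' = P' := by
    rw [← star_eq_adjoint]; exact isSelfAdjoint_starProjection K
  -- the partial isometry V
  set V : H →L[ℂ] H := W.comp P with hV_def
  have hKmem : ∀ x : H, A x ∈ K := fun x => Ra.le_topologicalClosure (hmemRa x)
  have hVA : ∀ x : H, V (A x) = T x := by
    intro x
    show W (P (A x)) = T x
    have h1 : P (A x) = ⟨A x, hKmem x⟩ :=
      Submodule.orthogonalProjectionOnto_mem_subspace_eq_self (⟨A x, hKmem x⟩ : K)
    rw [h1]
    have h2 : (⟨A x, hKmem x⟩ : K) = e ⟨A x, hmemRa x⟩ := rfl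
    rw [h2, hWe]
    exact hf x
  have hP'P : ∀ x : H, P' (P' x) = P' x := fun x => hPmem (P' x) (P x).2
  have hVVadj : adjoint V * V = P' := by
    ext x
    refine ext_inner_right ℂ fun y => ?_
    show ⟪adjoint V (V x), y⟫ = ⟪P' x, y⟫
    rw [adjoint_inner_left]
    have h2 : ⟪V x, V y⟫ = ⟪P' x, P' y⟫ := WIso.inner_map_map (P x) (P y)
    rw [h2]
    calc ⟪P' x, P' y⟫ = ⟪P' x, adjoint P' y⟫ := by rw [hP'sa]
    _ = ⟪P' (P' x), y⟫ := adjoint_inner_right P' _ _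
    _ = ⟪P' x, y⟫ := by rw [hP'P]
  have hVpi : V = V * adjoint V * V := by
    rw [mul_assoc, hVVadj]
    ext x
    show V x = V (P' x)
    show W (P x) = W (P (P' x))
    congr 1
    exact (Submodule.orthogonalProjectionOnto_mem_subspace_eq_self (P x)).symm
  have hT : T = V * A := by
    ext x
    exact (hVA x).symm
  have hPA : P' * A = A := by
    ext x
    exact hPmem (A x) (hKmem x)
  exact ⟨V, A, hVpi, hadjA, hT, by rw [hVVadj]; exact hPA⟩

/-- a semigroup containing every partial isometry of `B(H)` is an SI
semigroup. -/
theorem stmt6' (S : Set (H →L[ℂ] H)) (hS : (∀ A ∈ S, ∀ B ∈ S, A * B ∈ S))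
    (hpi : ∀ T : H →L[ℂ] H, T = T * adjoint T * T → T ∈ S) :
    ∀ J : Set (H →L[ℂ] H), (J ⊆ S ∧ ∀ T ∈ J, ∀ X ∈ S, X * T ∈ J ∧ T * X ∈ J) →
      ∀ T ∈ J, adjoint T ∈ J := by
  intro J hJ T hT
  obtain ⟨V, A, hVpi, hAsa, hTVA, hPA⟩ := exists_polar T
  have hstar : ∀ X Y : H →L[ℂ] H, adjoint (X * Y) = adjoint Y * adjoint X := by
    intro X Y
    rw [← star_eq_adjoint, ← star_eq_adjoint, ← star_eq_adjoint, star_mul]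
  have hVS : adjoint V ∈ S := by
    refine hpi _ ?_
    rw [adjoint_adjoint]
    calc adjoint V = adjoint (V * adjoint V * V) := by rw [← hVpi]
    _ = adjoint V * adjoint (V * adjoint V) := hstar _ _
    _ = adjoint V * (adjoint (adjoint V) * adjoint V) := by rw [hstar]
    _ = adjoint V * (V * adjoint V) := by rw [adjoint_adjoint]
    _ = adjoint V * V * adjoint V := (mul_assoc _ _ _).symm
  have hgoal : adjoint T = adjoint V * T * adjoint V := by
    calc adjoint T = adjoint (V * A) := by rw [← hTVA]
    _ = adjoint A * adjoint V := hstar _ _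
    _ = A * adjoint V := by rw [hAsa]
    _ = (adjoint V * V * A) * adjoint V := by rw [hPA]
    _ = (adjoint V * (V * A)) * adjoint V := by rw [mul_assoc (adjoint V) V A]
    _ = adjoint V * T * adjoint V := by rw [← hTVA]
  have h1 : adjoint V * T ∈ J := (hJ.2 T hT (adjoint V) hVS).1
  have h2 : adjoint V * T * adjoint V ∈ J := (hJ.2 _ h1 (adjoint V) hVS).2
  rw [hgoal]
  exact h2


/-- a semigroup containing every partial isometry of `B(H)` is an SI
semigroup. -/
theorem stmt6 (S : Set (H →L[ℂ] H)) (hS : IsMulSemigroup S)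
    (hpi : ∀ T : H →L[ℂ] H, T = T * adjoint T * T → T ∈ S) :
    IsSI S := by
  intro J hJ T hT
  exact stmt6' S hS hpi J hJ T hT
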